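/- Let X be an obtuse random variable in C^N with 3-tensor S^{ij}_k = E[X^i X^j conj(X^k)]. Then the matrix S_0 = (S^{ij}_0)_{i,j=0,...,N} is symmetric and unitary; consequently there exists a unitary matrix V with S_0 = V Vᵀ, and for any such V the random variable R = V* X is a real obtuse random variable (i.e., takes values in R^N almost surely). -/

import Mathlib

open scoped BigOperators InnerProductSpace ComplexConjugate
open Matrix

/-- The extended coordinate vector of an obtuse random variable at the sample point
`ω`: `X^0 = 1` together with the coordinates of the value `v ω ∈ ℂ^N`. -/
def hatv {N : ℕ} (v : Fin (N + 1) → EuclideanSpace ℂ (Fin N))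
    (ω : Fin (N + 1)) : Fin (N + 1) → ℂ :=
  Fin.cons 1 (fun k => v ω k)

/-- The 3-tensor of an obtuse random variable: `S^{ij}_k = E[X^i X^j conj(X^k)]`. -/
noncomputable def tensorS {N : ℕ} (p : Fin (N + 1) → ℝ)
    (v : Fin (N + 1) → EuclideanSpace ℂ (Fin N)) (i j k : Fin (N + 1)) : ℂ :=
  ∑ ω, (p ω : ℂ) * (hatv v ω i * hatv v ω j * (starRingEnd ℂ) (hatv v ω k))

/-- `V` is a unitary of `ℂ^{N+1}` obtained from a unitary of `ℂ^N` extended by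
`V e₀ = e₀`. -/
def FixesE0 {N : ℕ} (V : Matrix (Fin (N + 1)) (Fin (N + 1)) ℂ) : Prop :=
  V 0 0 = 1 ∧ ∀ j, j ≠ 0 → V 0 j = 0 ∧ V j 0 = 0

lemma hatv_zero {N : ℕ} (v : Fin (N + 1) → EuclideanSpace ℂ (Fin N)) (ω : Fin (N + 1)) :
    hatv v ω 0 = 1 := rfl

lemma hatv_succ {N : ℕ} (v : Fin (N + 1) → EuclideanSpace ℂ (Fin N)) (ω : Fin (N + 1))
    (k : Fin N) : hatv v ω k.succ = v ω k := rfl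

/-- column orthonormality packaged -/
lemma sum_orth {N : ℕ} (v : Fin (N + 1) → EuclideanSpace ℂ (Fin N))
    (p : Fin (N + 1) → ℝ) (hp1 : ∑ i, p i = 1)
    (hc : ∀ k, ∑ i, (p i : ℂ) * v i k = 0)
    (hn : ∀ k l, ∑ i, (p i : ℂ) * ((starRingEnd ℂ) (v i k) * v i l)
        = if k = l then 1 else 0) (i j : Fin (N + 1)) :
    ∑ ω, (p ω : ℂ) * ((starRingEnd ℂ) (hatv v ω i) * hatv v ω j)
      = if i = j then 1 else 0 := by
  induction i using Fin.cases with
  | zero =>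
    induction j using Fin.cases with
    | zero =>
      simp only [hatv_zero, _root_.map_one, one_mul, mul_one, if_pos rfl]
      rw [← Complex.ofReal_sum, hp1, Complex.ofReal_one]; simp
    | succ l =>
      simp only [hatv_zero, hatv_succ, _root_.map_one, one_mul]
      rw [if_neg (Fin.succ_ne_zero l).symm]
      exact hc l
  | succ k =>
    induction j using Fin.cases with
    | zero =>
      simp only [hatv_zero, hatv_succ, mul_one]
      rw [if_neg (Fin.succ_ne_zero k)]
      have := congrArg (starRingEnd ℂ) (hc k)
      simpa [map_sum, Complex.conj_ofReal] using this
    | succ l =>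
      simp only [hatv_succ]
      rw [hn k l]
      simp [Fin.succ_inj]

noncomputable def Wmat {N : ℕ} (v : Fin (N + 1) → EuclideanSpace ℂ (Fin N))
    (p : Fin (N + 1) → ℝ) : Matrix (Fin (N + 1)) (Fin (N + 1)) ℂ :=
  fun ω i => (Real.sqrt (p ω) : ℂ) * hatv v ω i

lemma sqrt_sq {N : ℕ} (p : Fin (N + 1) → ℝ) (hp : ∀ i, 0 < p i) (ω : Fin (N + 1)) :
    ((Real.sqrt (p ω) : ℂ)) * (Real.sqrt (p ω) : ℂ) = (p ω : ℂ) := by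
  rw [← Complex.ofReal_mul, Real.mul_self_sqrt (hp ω).le]

lemma WHW {N : ℕ} (v : Fin (N + 1) → EuclideanSpace ℂ (Fin N))
    (p : Fin (N + 1) → ℝ) (hp : ∀ i, 0 < p i) (hp1 : ∑ i, p i = 1)
    (hc : ∀ k, ∑ i, (p i : ℂ) * v i k = 0)
    (hn : ∀ k l, ∑ i, (p i : ℂ) * ((starRingEnd ℂ) (v i k) * v i l)
        = if k = l then 1 else 0) :
    (Wmat v p)ᴴ * Wmat v p = 1 := by
  ext i j
  rw [Matrix.mul_apply, Matrix.one_apply]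
  rw [show ∀ (a b : ℂ), (if i = j then a else b) = if i = j then a else b from fun a b => rfl]
  rw [← sum_orth v p hp1 hc hn i j]
  refine Finset.sum_congr rfl fun ω _ => ?_
  simp only [Wmat, Matrix.conjTranspose_apply, star_mul', Complex.star_def,
    Complex.conj_ofReal]
  rw [← sqrt_sq p hp ω]
  ring

lemma row_orth {N : ℕ} (v : Fin (N + 1) → EuclideanSpace ℂ (Fin N))
    (p : Fin (N + 1) → ℝ) (hp : ∀ i, 0 < p i) (hp1 : ∑ i, p i = 1)
    (hc : ∀ k, ∑ i, (p i : ℂ) * v i k = 0)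
    (hn : ∀ k l, ∑ i, (p i : ℂ) * ((starRingEnd ℂ) (v i k) * v i l)
        = if k = l then 1 else 0) (ω' ω : Fin (N + 1)) :
    (p ω' : ℂ) * ∑ j, hatv v ω' j * (starRingEnd ℂ) (hatv v ω j)
      = if ω' = ω then 1 else 0 := by
  have hWWH : Wmat v p * (Wmat v p)ᴴ = 1 :=
    mul_eq_one_comm.mp (WHW v p hp hp1 hc hn)
  have hent := congrFun (congrFun hWWH ω') ω
  rw [Matrix.mul_apply, Matrix.one_apply] at hent
  have hfac : ∑ j, Wmat v p ω' j * (Wmat v p)ᴴ j ω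
      = ((Real.sqrt (p ω') : ℂ) * (Real.sqrt (p ω) : ℂ))
        * ∑ j, hatv v ω' j * (starRingEnd ℂ) (hatv v ω j) := by
    rw [Finset.mul_sum]
    refine Finset.sum_congr rfl fun j _ => ?_
    simp only [Wmat, Matrix.conjTranspose_apply, star_mul', Complex.star_def,
      Complex.conj_ofReal]
    ring
  rw [hfac] at hent
  by_cases h : ω' = ω
  · subst h
    rw [sqrt_sq p hp ω'] at hent
    rw [hent, if_pos rfl]
  · rw [if_neg h] at hent ⊢
    have hnz : ((Real.sqrt (p ω') : ℂ) * (Real.sqrt (p ω) : ℂ)) ≠ 0 := by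
      apply mul_ne_zero <;>
      · rw [Ne, Complex.ofReal_eq_zero]
        exact (Real.sqrt_pos.mpr (hp _)).ne'
    rw [mul_eq_zero] at hent
    rcases hent with h1 | h2
    · exact absurd h1 hnz
    · rw [h2, mul_zero]

lemma key3 {N : ℕ} (v : Fin (N + 1) → EuclideanSpace ℂ (Fin N))
    (p : Fin (N + 1) → ℝ) (hp : ∀ i, 0 < p i) (hp1 : ∑ i, p i = 1)
    (hc : ∀ k, ∑ i, (p i : ℂ) * v i k = 0)
    (hn : ∀ k l, ∑ i, (p i : ℂ) * ((starRingEnd ℂ) (v i k) * v i l)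
        = if k = l then 1 else 0)
    (S0 : Matrix (Fin (N + 1)) (Fin (N + 1)) ℂ)
    (hS0 : ∀ i j, S0 i j = tensorS p v i j 0) (ω : Fin (N + 1)) (i : Fin (N + 1)) :
    ∑ j, S0 i j * (starRingEnd ℂ) (hatv v ω j) = hatv v ω i := by
  have hS : ∀ j, S0 i j = ∑ ω', (p ω' : ℂ) * (hatv v ω' i * hatv v ω' j) := by
    intro j
    rw [hS0, tensorS]
    refine Finset.sum_congr rfl fun ω' _ => ?_
    rw [hatv_zero, _root_.map_one, mul_one]
  calc ∑ j, S0 i j * (starRingEnd ℂ) (hatv v ω j)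
      = ∑ j, ∑ ω', (p ω' : ℂ) * (hatv v ω' i * hatv v ω' j) * (starRingEnd ℂ) (hatv v ω j) := by
        refine Finset.sum_congr rfl fun j _ => ?_
        rw [hS j, Finset.sum_mul]
    _ = ∑ ω', ∑ j, (p ω' : ℂ) * (hatv v ω' i * hatv v ω' j) * (starRingEnd ℂ) (hatv v ω j) :=
        Finset.sum_comm
    _ = ∑ ω', hatv v ω' i * ((p ω' : ℂ) * ∑ j, hatv v ω' j * (starRingEnd ℂ) (hatv v ω j)) := by
        refine Finset.sum_congr rfl fun ω' _ => ?_
        rw [Finset.mul_sum, Finset.mul_sum]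
        refine Finset.sum_congr rfl fun j _ => ?_
        ring
    _ = ∑ ω', hatv v ω' i * (if ω' = ω then 1 else 0) := by
        refine Finset.sum_congr rfl fun ω' _ => ?_
        rw [row_orth v p hp hp1 hc hn ω' ω]
    _ = hatv v ω i := by simp

lemma S0_eq {N : ℕ} (v : Fin (N + 1) → EuclideanSpace ℂ (Fin N))
    (p : Fin (N + 1) → ℝ) (hp : ∀ i, 0 < p i)
    (S0 : Matrix (Fin (N + 1)) (Fin (N + 1)) ℂ)
    (hS0 : ∀ i j, S0 i j = tensorS p v i j 0) :
    S0 = (Wmat v p)ᵀ * Wmat v p := by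
  ext i j
  rw [hS0, tensorS, Matrix.mul_apply]
  refine Finset.sum_congr rfl fun ω _ => ?_
  simp only [Matrix.transpose_apply, Wmat, hatv_zero, _root_.map_one, mul_one]
  rw [← sqrt_sq p hp ω]
  ring

lemma WtHWt {N : ℕ} (v : Fin (N + 1) → EuclideanSpace ℂ (Fin N))
    (p : Fin (N + 1) → ℝ) (hp : ∀ i, 0 < p i) (hp1 : ∑ i, p i = 1)
    (hc : ∀ k, ∑ i, (p i : ℂ) * v i k = 0)
    (hn : ∀ k l, ∑ i, (p i : ℂ) * ((starRingEnd ℂ) (v i k) * v i l)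
        = if k = l then 1 else 0) :
    ((Wmat v p)ᵀ)ᴴ * (Wmat v p)ᵀ = 1 := by
  have hWWH : Wmat v p * (Wmat v p)ᴴ = 1 :=
    mul_eq_one_comm.mp (WHW v p hp hp1 hc hn)
  calc ((Wmat v p)ᵀ)ᴴ * (Wmat v p)ᵀ
      = ((Wmat v p)ᴴ)ᵀ * (Wmat v p)ᵀ := by
        ext a b
        rfl
    _ = (Wmat v p * (Wmat v p)ᴴ)ᵀ := (Matrix.transpose_mul _ _).symm
    _ = 1 := by rw [hWWH, Matrix.transpose_one]

lemma exists_basis {N : ℕ} (p : Fin (N + 1) → ℝ) (hp : ∀ i, 0 < p i)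
    (hp1 : ∑ i, p i = 1) :
    ∃ b : OrthonormalBasis (Fin (N + 1)) ℝ (EuclideanSpace ℝ (Fin (N + 1))),
      ∀ ω, b 0 ω = Real.sqrt (p ω) := by
  set u : EuclideanSpace ℝ (Fin (N + 1)) := WithLp.toLp 2 (fun ω => Real.sqrt (p ω)) with hu
  have hinner : (inner ℝ u u : ℝ) = 1 := by
    rw [PiLp.inner_apply]
    simp only [RCLike.inner_apply, starRingEnd_apply, star_trivial]
    calc ∑ ω, u ω * u ω = ∑ ω, p ω :=
          Finset.sum_congr rfl fun ω _ => Real.mul_self_sqrt (hp ω).le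
      _ = 1 := hp1
  have horth : Orthonormal ℝ (({0} : Set (Fin (N + 1))).restrict
      (fun _ : Fin (N + 1) => u)) := by
    rw [orthonormal_iff_ite]
    intro i j
    have hij : i = j :=
      ((Set.subsingleton_coe _).mpr Set.subsingleton_singleton).elim i j
    subst hij
    rw [if_pos rfl]
    exact hinner
  obtain ⟨b, hb⟩ := Orthonormal.exists_orthonormalBasis_extension_of_card_eq
    (by simp) horth
  exact ⟨b, fun ω => by rw [hb 0 rfl]⟩

/-- **Reduction to real obtuse random variables.**
Let `X` be an obtuse random variable in `ℂ^N` with 3-tensor `S` and let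
`S₀ = (S^{ij}_0)_{i,j}`.  Then `S₀` is symmetric and unitary; there exists a unitary
`V` (fixing `e₀`) with `S₀ = V Vᵀ`, and for any such `V` the random variable
`R = V* X` takes only real values. -/
theorem tensor_S0_symmetric_unitary_and_real_reduction (N : ℕ)
    (v : Fin (N + 1) → EuclideanSpace ℂ (Fin N)) (hv : Function.Injective v)
    (p : Fin (N + 1) → ℝ) (hp : ∀ i, 0 < p i) (hp1 : ∑ i, p i = 1)
    (hc : ∀ k, ∑ i, (p i : ℂ) * v i k = 0)
    (hn : ∀ k l, ∑ i, (p i : ℂ) * ((starRingEnd ℂ) (v i k) * v i l)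
        = if k = l then 1 else 0)
    (S0 : Matrix (Fin (N + 1)) (Fin (N + 1)) ℂ)
    (hS0 : ∀ i j, S0 i j = tensorS p v i j 0) :
    S0ᵀ = S0 ∧ S0 ∈ Matrix.unitaryGroup (Fin (N + 1)) ℂ ∧
    (∃ V ∈ Matrix.unitaryGroup (Fin (N + 1)) ℂ, FixesE0 V ∧ S0 = V * Vᵀ) ∧
    ∀ V ∈ Matrix.unitaryGroup (Fin (N + 1)) ℂ, FixesE0 V → S0 = V * Vᵀ →
      ∀ ω i, ((∑ j, (starRingEnd ℂ) (V j i) * hatv v ω j)).im = 0 := by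
  have hW : S0 = (Wmat v p)ᵀ * Wmat v p := S0_eq v p hp S0 hS0
  have hWHW : (Wmat v p)ᴴ * Wmat v p = 1 := WHW v p hp hp1 hc hn
  have hT1 : ((Wmat v p)ᵀ)ᴴ * (Wmat v p)ᵀ = 1 := WtHWt v p hp hp1 hc hn
  refine ⟨?_, ?_, ?_, ?_⟩
  · -- symmetric
    rw [hW, Matrix.transpose_mul, Matrix.transpose_transpose]
  · -- unitary
    rw [Matrix.mem_unitaryGroup_iff', Matrix.star_eq_conjTranspose, hW,
      Matrix.conjTranspose_mul]
    calc (Wmat v p)ᴴ * ((Wmat v p)ᵀ)ᴴ * ((Wmat v p)ᵀ * Wmat v p)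
        = (Wmat v p)ᴴ * (((Wmat v p)ᵀ)ᴴ * (Wmat v p)ᵀ) * Wmat v p := by
          simp only [Matrix.mul_assoc]
      _ = 1 := by rw [hT1, Matrix.mul_one, hWHW]
  · -- existence of V
    obtain ⟨b, hb⟩ := exists_basis p hp hp1
    set U : Matrix (Fin (N + 1)) (Fin (N + 1)) ℂ :=
      fun ω j => ((b j ω : ℝ) : ℂ) with hUdef
    have hbo : ∀ i j, ∑ ω, (b i ω) * (b j ω) = if i = j then (1 : ℝ) else 0 := by
      intro i j
      have h := orthonormal_iff_ite.mp b.orthonormal i j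
      rw [PiLp.inner_apply] at h
      simpa [RCLike.inner_apply, starRingEnd_apply, star_trivial, mul_comm] using h
    have hUU : Uᴴ * U = 1 := by
      ext i j
      rw [Matrix.mul_apply, Matrix.one_apply]
      calc ∑ ω, Uᴴ i ω * U ω j = ∑ ω, ((b i ω * b j ω : ℝ) : ℂ) := by
            refine Finset.sum_congr rfl fun ω _ => ?_
            rw [Matrix.conjTranspose_apply]
            simp [hUdef, Matrix.conjTranspose_apply, Complex.conj_ofReal,
              Complex.ofReal_mul]
        _ = ((∑ ω, b i ω * b j ω : ℝ) : ℂ) := by rw [Complex.ofReal_sum]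
        _ = if i = j then 1 else 0 := by rw [hbo i j]; split <;> simp
    have hUt : Uᵀ = Uᴴ := by
      ext i j
      rw [Matrix.conjTranspose_apply, Matrix.transpose_apply]
      simp [hUdef, Matrix.conjTranspose_apply, Matrix.transpose_apply,
        Complex.conj_ofReal]
    have hUUt : U * Uᵀ = 1 := by
      rw [hUt]; exact mul_eq_one_comm.mp hUU
    refine ⟨(Wmat v p)ᵀ * U, ?_, ⟨?_, ?_⟩, ?_⟩
    · rw [Matrix.mem_unitaryGroup_iff', Matrix.star_eq_conjTranspose,
        Matrix.conjTranspose_mul]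
      calc Uᴴ * ((Wmat v p)ᵀ)ᴴ * ((Wmat v p)ᵀ * U)
          = Uᴴ * (((Wmat v p)ᵀ)ᴴ * (Wmat v p)ᵀ) * U := by
            simp only [Matrix.mul_assoc]
        _ = 1 := by rw [hT1, Matrix.mul_one, hUU]
    · -- V 0 0 = 1
      rw [Matrix.mul_apply]
      calc ∑ ω, (Wmat v p)ᵀ 0 ω * U ω 0
          = ∑ ω, ((p ω : ℝ) : ℂ) := by
            refine Finset.sum_congr rfl fun ω _ => ?_
            simp only [Matrix.transpose_apply, Wmat, hatv_zero, mul_one, hUdef, hb ω]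
            exact sqrt_sq p hp ω
        _ = 1 := by rw [← Complex.ofReal_sum, hp1, Complex.ofReal_one]
    · -- off-diagonal zeros
      intro j hj
      constructor
      · rw [Matrix.mul_apply]
        have : ∑ ω, (Wmat v p)ᵀ 0 ω * U ω j
            = ((∑ ω, b 0 ω * b j ω : ℝ) : ℂ) := by
          rw [Complex.ofReal_sum]
          refine Finset.sum_congr rfl fun ω _ => ?_
          simp only [Matrix.transpose_apply, Wmat, hatv_zero, mul_one, hUdef,
            hb ω, Complex.ofReal_mul]
        rw [this, hbo 0 j, if_neg (Ne.symm hj), Complex.ofReal_zero]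
      · rw [Matrix.mul_apply]
        have hterm : ∀ ω, (Wmat v p)ᵀ j ω * U ω 0 = (p ω : ℂ) * hatv v ω j := by
          intro ω
          simp only [Matrix.transpose_apply, Wmat, hUdef, hb ω]
          rw [← sqrt_sq p hp ω]
          ring
        rw [Finset.sum_congr rfl fun ω _ => hterm ω]
        obtain ⟨k, rfl⟩ : ∃ k : Fin N, j = k.succ := by
          induction j using Fin.cases with
          | zero => exact absurd rfl hj
          | succ k => exact ⟨k, rfl⟩
        simp only [hatv_succ]
        exact hc k
    · -- S0 = V Vᵀ
      rw [Matrix.transpose_mul]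
      calc S0 = (Wmat v p)ᵀ * Wmat v p := hW
        _ = (Wmat v p)ᵀ * (U * Uᵀ) * Wmat v p := by rw [hUUt, Matrix.mul_one]
        _ = (Wmat v p)ᵀ * U * (Uᵀ * ((Wmat v p)ᵀ)ᵀ) := by
            rw [Matrix.transpose_transpose]; simp only [Matrix.mul_assoc]
  · -- reality
    intro V hV hfix hS0V ω i
    set x : Fin (N + 1) → ℂ := hatv v ω with hx
    have hxS : S0 *ᵥ star x = x := by
      funext i'
      rw [Matrix.mulVec, dotProduct]
      calc ∑ j, S0 i' j * star x j
          = ∑ j, S0 i' j * (starRingEnd ℂ) (hatv v ω j) := rfl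
        _ = hatv v ω i' := key3 v p hp hp1 hc hn S0 hS0 ω i'
    have hVH : Vᴴ * V = 1 := by
      have := Matrix.mem_unitaryGroup_iff'.mp hV
      rwa [Matrix.star_eq_conjTranspose] at this
    have hVT : Vᵀ = Vᴴ * S0 := by
      rw [hS0V, ← Matrix.mul_assoc, hVH, Matrix.one_mul]
    have h2 : Vᵀ *ᵥ star x = Vᴴ *ᵥ x := by
      rw [hVT, ← Matrix.mulVec_mulVec, hxS]
    rw [← Complex.conj_eq_iff_im]
    have h3 := congrFun h2 i
    rw [Matrix.mulVec, Matrix.mulVec, dotProduct, dotProduct] at h3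
    calc (starRingEnd ℂ) (∑ j, (starRingEnd ℂ) (V j i) * hatv v ω j)
        = ∑ j, V j i * star x j := by
          rw [map_sum]
          refine Finset.sum_congr rfl fun j _ => ?_
          rw [_root_.map_mul, Complex.conj_conj]
          rfl
      _ = ∑ j, Vᵀ i j * star x j := rfl
      _ = ∑ j, Vᴴ i j * x j := h3
      _ = ∑ j, (starRingEnd ℂ) (V j i) * hatv v ω j := rfl
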